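/- For bounded real random variables X, Y on the same probability space and α ∈ (0,1), EVaR is convex: EVaR_α(λX + (1-λ)Y) ≤ λ·EVaR_α(X) + (1-λ)·EVaR_α(Y) for all λ ∈ [0,1]. -/

import Mathlib

open MeasureTheory Real

noncomputable def EVaR {Ω : Type*} [MeasurableSpace Ω] (μ : Measure Ω) (X : Ω → ℝ)
    (α : ℝ) : ℝ :=
  sInf ((fun s : ℝ => (Real.log (∫ ω, Real.exp (-s * X ω) ∂μ) - Real.log α) / s) '' Set.Ioi 0)

section aux

variable {Ω : Type*} [MeasurableSpace Ω] (μ : Measure Ω) [IsProbabilityMeasure μ]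

lemma evar_exp_integrable (X : Ω → ℝ) (hX : Measurable X) (C : ℝ) (hb : ∀ ω, |X ω| ≤ C)
    (s : ℝ) : Integrable (fun ω => Real.exp (-s * X ω)) μ := by
  refine (integrable_const (Real.exp (|s| * C))).mono'
    (Real.measurable_exp.comp (hX.const_mul (-s))).aestronglyMeasurable
    (Filter.Eventually.of_forall fun ω => ?_)
  rw [Real.norm_eq_abs, Real.abs_exp, Real.exp_le_exp]
  have h2 : |s * X ω| ≤ |s| * C := by
    rw [abs_mul]; exact mul_le_mul_of_nonneg_left (hb ω) (abs_nonneg s)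
  have := neg_abs_le (s * X ω)
  nlinarith [le_abs_self (s * X ω)]

lemma evar_exp_int_pos (X : Ω → ℝ) (hX : Measurable X) (C : ℝ) (hb : ∀ ω, |X ω| ≤ C)
    (s : ℝ) : 0 < ∫ ω, Real.exp (-s * X ω) ∂μ := by
  have h1 : ∫ ω, Real.exp (-(|s| * C)) ∂μ ≤ ∫ ω, Real.exp (-s * X ω) ∂μ := by
    refine integral_mono (integrable_const _) (evar_exp_integrable μ X hX C hb s)
      fun ω => Real.exp_le_exp.2 ?_
    have h2 : |s * X ω| ≤ |s| * C := by
      rw [abs_mul]; exact mul_le_mul_of_nonneg_left (hb ω) (abs_nonneg s)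
    nlinarith [le_abs_self (s * X ω)]
  have h3 : ∫ (_ : Ω), Real.exp (-(|s| * C)) ∂μ = Real.exp (-(|s| * C)) := by simp
  rw [h3] at h1
  exact lt_of_lt_of_le (Real.exp_pos _) h1

lemma evar_g_lb (X : Ω → ℝ) (hX : Measurable X) (C : ℝ) (hb : ∀ ω, |X ω| ≤ C)
    {α : ℝ} (hα : α ∈ Set.Ioo (0 : ℝ) 1) {s : ℝ} (hs : 0 < s) :
    -C ≤ (Real.log (∫ ω, Real.exp (-s * X ω) ∂μ) - Real.log α) / s := by
  have hA : 0 < ∫ ω, Real.exp (-s * X ω) ∂μ := evar_exp_int_pos μ X hX C hb s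
  have h1 : Real.exp (-(s * C)) ≤ ∫ ω, Real.exp (-s * X ω) ∂μ := by
    have h2 : ∫ (_ : Ω), Real.exp (-(s * C)) ∂μ ≤ ∫ ω, Real.exp (-s * X ω) ∂μ := by
      refine integral_mono (integrable_const _) (evar_exp_integrable μ X hX C hb s)
        fun ω => Real.exp_le_exp.2 ?_
      have := (abs_le.1 (hb ω)).2
      nlinarith
    simpa using h2
  have hlog : -(s * C) ≤ Real.log (∫ ω, Real.exp (-s * X ω) ∂μ) :=
    (Real.le_log_iff_exp_le hA).2 h1
  have hlα : Real.log α < 0 := Real.log_neg hα.1 hα.2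
  rw [le_div_iff₀ hs]
  nlinarith

lemma evar_bddBelow (X : Ω → ℝ) (hX : Measurable X) (C : ℝ) (hb : ∀ ω, |X ω| ≤ C)
    {α : ℝ} (hα : α ∈ Set.Ioo (0 : ℝ) 1) :
    BddBelow ((fun s : ℝ =>
      (Real.log (∫ ω, Real.exp (-s * X ω) ∂μ) - Real.log α) / s) '' Set.Ioi 0) := by
  refine ⟨-C, fun x hx => ?_⟩
  obtain ⟨s, hs, rfl⟩ := hx
  exact evar_g_lb μ X hX C hb hα hs

/-- Key Hölder step: for `0 < lam < 1` and any `t₁, t₂ > 0`. -/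
lemma evar_key (X Y : Ω → ℝ) (hX : Measurable X) (hY : Measurable Y)
    (CX : ℝ) (hXb : ∀ ω, |X ω| ≤ CX) (CY : ℝ) (hYb : ∀ ω, |Y ω| ≤ CY)
    {α : ℝ} (hα : α ∈ Set.Ioo (0 : ℝ) 1) {lam : ℝ} (h0 : 0 < lam) (h1 : lam < 1)
    {t₁ t₂ : ℝ} (ht₁ : 0 < t₁) (ht₂ : 0 < t₂) :
    EVaR μ (fun ω => lam * X ω + (1 - lam) * Y ω) α ≤
      lam * ((Real.log (∫ ω, Real.exp (-t₁ * X ω) ∂μ) - Real.log α) / t₁)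
      + (1 - lam) * ((Real.log (∫ ω, Real.exp (-t₂ * Y ω) ∂μ) - Real.log α) / t₂) := by
  set Z : Ω → ℝ := fun ω => lam * X ω + (1 - lam) * Y ω with hZdef
  have hZ : Measurable Z := (hX.const_mul lam).add (hY.const_mul (1 - lam))
  have hZb : ∀ ω, |Z ω| ≤ lam * CX + (1 - lam) * CY := by
    intro ω
    calc |Z ω| ≤ |lam * X ω| + |(1 - lam) * Y ω| := abs_add_le _ _
    _ ≤ lam * CX + (1 - lam) * CY := by
        rw [abs_mul, abs_mul, abs_of_pos h0, abs_of_pos (by linarith : (0:ℝ) < 1 - lam)]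
        have := hXb ω; have := hYb ω
        nlinarith
  set D : ℝ := lam * t₂ + (1 - lam) * t₁ with hDdef
  have hD : 0 < D := by rw [hDdef]; nlinarith
  set t : ℝ := t₁ * t₂ / D with htdef
  have ht : 0 < t := by positivity
  set θ : ℝ := lam * t₂ / D with hθdef
  have hθ0 : 0 < θ := by positivity
  have hθ1 : θ < 1 := by
    rw [hθdef, div_lt_one hD]
    nlinarith
  set p : ℝ := θ⁻¹ with hpdef
  set q : ℝ := (1 - θ)⁻¹ with hqdef
  have hpq : Real.HolderConjugate p q :=
    Real.holderConjugate_iff.mpr ⟨(one_lt_inv₀ hθ0).2 hθ1, by rw [hpdef, hqdef, inv_inv, inv_inv]; ring⟩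
  have hA : 0 < ∫ ω, Real.exp (-t₁ * X ω) ∂μ := evar_exp_int_pos μ X hX CX hXb t₁
  have hB : 0 < ∫ ω, Real.exp (-t₂ * Y ω) ∂μ := evar_exp_int_pos μ Y hY CY hYb t₂
  have hI : 0 < ∫ ω, Real.exp (-t * Z ω) ∂μ :=
    evar_exp_int_pos μ Z hZ _ hZb t
  -- the two factors
  set f : Ω → ℝ := fun ω => Real.exp (-(t * lam) * X ω) with hfdef
  set g : Ω → ℝ := fun ω => Real.exp (-(t * (1 - lam)) * Y ω) with hgdef
  have hfm : Measurable f := Real.measurable_exp.comp (hX.const_mul _)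
  have hgm : Measurable g := Real.measurable_exp.comp (hY.const_mul _)
  have hfLp : MemLp f (ENNReal.ofReal p) μ := by
    refine MemLp.of_bound hfm.aestronglyMeasurable (Real.exp (|t * lam| * CX))
      (Filter.Eventually.of_forall fun ω => ?_)
    rw [hfdef]
    simp only [Real.norm_eq_abs, Real.abs_exp, Real.exp_le_exp]
    have h2 : |t * lam * X ω| ≤ |t * lam| * CX := by
      rw [abs_mul]; exact mul_le_mul_of_nonneg_left (hXb ω) (abs_nonneg _)
    linarith [neg_le_abs (t * lam * X ω)]
  have hgLp : MemLp g (ENNReal.ofReal q) μ := by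
    refine MemLp.of_bound hgm.aestronglyMeasurable (Real.exp (|t * (1 - lam)| * CY))
      (Filter.Eventually.of_forall fun ω => ?_)
    rw [hgdef]
    simp only [Real.norm_eq_abs, Real.abs_exp, Real.exp_le_exp]
    have h2 : |t * (1 - lam) * Y ω| ≤ |t * (1 - lam)| * CY := by
      rw [abs_mul]; exact mul_le_mul_of_nonneg_left (hYb ω) (abs_nonneg _)
    linarith [neg_le_abs (t * (1 - lam) * Y ω)]
  have holder := integral_mul_le_Lp_mul_Lq_of_nonneg hpq
    (Filter.Eventually.of_forall fun ω => (Real.exp_pos _).le)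
    (Filter.Eventually.of_forall fun ω => (Real.exp_pos _).le) hfLp hgLp
  -- rewrite the three integrals
  have hkey1 : t * lam * p = t₁ := by
    rw [hpdef, hθdef, htdef]
    field_simp
  have hkey2 : t * (1 - lam) * q = t₂ := by
    have hlne : (1 : ℝ) - lam ≠ 0 := by linarith
    have h1θ : 1 - θ = (1 - lam) * t₁ / D := by
      rw [hθdef, eq_div_iff hD.ne', sub_mul, div_mul_cancel₀ _ hD.ne', hDdef]; ring
    rw [hqdef, h1θ, htdef]
    rw [inv_div]
    field_simp
  have hfg : (fun ω => f ω * g ω) = fun ω => Real.exp (-t * Z ω) := by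
    funext ω
    rw [hfdef, hgdef, ← Real.exp_add, hZdef]
    congr 1
    ring
  have hfp : (fun ω => f ω ^ p) = fun ω => Real.exp (-t₁ * X ω) := by
    funext ω
    rw [hfdef, Real.rpow_def_of_pos (Real.exp_pos _), Real.log_exp]
    congr 1
    linear_combination (-X ω) * hkey1
  have hgq : (fun ω => g ω ^ q) = fun ω => Real.exp (-t₂ * Y ω) := by
    funext ω
    rw [hgdef, Real.rpow_def_of_pos (Real.exp_pos _), Real.log_exp]
    congr 1
    linear_combination (-Y ω) * hkey2
  rw [show (∫ a, f a * g a ∂μ) = ∫ ω, Real.exp (-t * Z ω) ∂μ by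
      exact congrArg (fun h => ∫ a, h a ∂μ) hfg,
    show (∫ a, f a ^ p ∂μ) = ∫ ω, Real.exp (-t₁ * X ω) ∂μ by
      exact congrArg (fun h => ∫ a, h a ∂μ) hfp,
    show (∫ a, g a ^ q ∂μ) = ∫ ω, Real.exp (-t₂ * Y ω) ∂μ by
      exact congrArg (fun h => ∫ a, h a ∂μ) hgq] at holder
  have h1p : 1 / p = θ := by rw [hpdef, one_div, inv_inv]
  have h1q : 1 / q = 1 - θ := by rw [hqdef, one_div, inv_inv]
  rw [h1p, h1q] at holder
  -- take logs
  have hlog : Real.log (∫ ω, Real.exp (-t * Z ω) ∂μ)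
      ≤ θ * Real.log (∫ ω, Real.exp (-t₁ * X ω) ∂μ)
        + (1 - θ) * Real.log (∫ ω, Real.exp (-t₂ * Y ω) ∂μ) := by
    have := Real.log_le_log hI holder
    rwa [Real.log_mul (Real.rpow_pos_of_pos hA θ).ne' (Real.rpow_pos_of_pos hB (1 - θ)).ne',
      Real.log_rpow hA, Real.log_rpow hB] at this
  -- conclude via csInf_le
  have hmem : (Real.log (∫ ω, Real.exp (-t * Z ω) ∂μ) - Real.log α) / t ∈
      ((fun s : ℝ => (Real.log (∫ ω, Real.exp (-s * Z ω) ∂μ) - Real.log α) / s) '' Set.Ioi 0) :=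
    ⟨t, ht, rfl⟩
  have hle1 : EVaR μ Z α ≤ (Real.log (∫ ω, Real.exp (-t * Z ω) ∂μ) - Real.log α) / t :=
    csInf_le (evar_bddBelow μ Z hZ _ hZb hα) hmem
  refine hle1.trans ?_
  have hstep : (Real.log (∫ ω, Real.exp (-t * Z ω) ∂μ) - Real.log α) / t
      ≤ (θ * Real.log (∫ ω, Real.exp (-t₁ * X ω) ∂μ)
        + (1 - θ) * Real.log (∫ ω, Real.exp (-t₂ * Y ω) ∂μ) - Real.log α) / t := by
    gcongr
  refine hstep.trans (le_of_eq ?_)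
  set LA := Real.log (∫ ω, Real.exp (-t₁ * X ω) ∂μ)
  set LB := Real.log (∫ ω, Real.exp (-t₂ * Y ω) ∂μ)
  have hlne : (1 : ℝ) - lam ≠ 0 := by linarith
  have hD' : lam * t₂ + (1 - lam) * t₁ ≠ 0 := hD.ne'
  rw [hθdef, htdef, hDdef]
  field_simp
  ring

end aux

theorem evar_convex {Ω : Type*} [MeasurableSpace Ω] (μ : Measure Ω)
    [IsProbabilityMeasure μ] (X Y : Ω → ℝ) (hX : Measurable X) (hY : Measurable Y)
    (CX : ℝ) (hXb : ∀ ω, |X ω| ≤ CX) (CY : ℝ) (hYb : ∀ ω, |Y ω| ≤ CY)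
    (α : ℝ) (hα : α ∈ Set.Ioo (0 : ℝ) 1) (lam : ℝ) (hlam : lam ∈ Set.Icc (0 : ℝ) 1) :
    EVaR μ (fun ω => lam * X ω + (1 - lam) * Y ω) α
      ≤ lam * EVaR μ X α + (1 - lam) * EVaR μ Y α := by
  rcases eq_or_lt_of_le hlam.1 with h0 | h0
  · -- lam = 0
    have hfun : (fun ω => lam * X ω + (1 - lam) * Y ω) = Y := by
      funext ω; rw [← h0]; ring
    rw [hfun, ← h0]
    norm_num
  · rcases eq_or_lt_of_le hlam.2 with h1 | h1
    · -- lam = 1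
      have hfun : (fun ω => lam * X ω + (1 - lam) * Y ω) = X := by
        funext ω; rw [h1]; ring
      rw [hfun, h1]
      norm_num
    · -- 0 < lam < 1
      refine le_of_forall_pos_le_add fun ε hε => ?_
      have hSXne : ((fun s : ℝ =>
          (Real.log (∫ ω, Real.exp (-s * X ω) ∂μ) - Real.log α) / s) '' Set.Ioi 0).Nonempty :=
        ⟨_, ⟨1, by norm_num, rfl⟩⟩
      have hSYne : ((fun s : ℝ =>
          (Real.log (∫ ω, Real.exp (-s * Y ω) ∂μ) - Real.log α) / s) '' Set.Ioi 0).Nonempty :=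
        ⟨_, ⟨1, by norm_num, rfl⟩⟩
      obtain ⟨x, ⟨t₁, ht₁, rfl⟩, hx⟩ := Real.lt_sInf_add_pos hSXne hε
      obtain ⟨y, ⟨t₂, ht₂, rfl⟩, hy⟩ := Real.lt_sInf_add_pos hSYne hε
      have hkey := evar_key μ X Y hX hY CX hXb CY hYb hα h0 h1 ht₁ ht₂
      have hEX : sInf ((fun s : ℝ =>
          (Real.log (∫ ω, Real.exp (-s * X ω) ∂μ) - Real.log α) / s) '' Set.Ioi 0)
          = EVaR μ X α := rfl
      have hEY : sInf ((fun s : ℝ =>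
          (Real.log (∫ ω, Real.exp (-s * Y ω) ∂μ) - Real.log α) / s) '' Set.Ioi 0)
          = EVaR μ Y α := rfl
      rw [hEX] at hx
      rw [hEY] at hy
      have := mul_le_mul_of_nonneg_left hx.le h0.le
      have := mul_le_mul_of_nonneg_left hy.le (by linarith : (0:ℝ) ≤ 1 - lam)
      nlinarith
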